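/- arXiv:math/0204156 — 6 statements merged into one kernel-verified Lean document; each statement's English description precedes it below -/
import Mathlib

section
/- For linear forms a_1, b_1, a_2, b_2, l_1, l_2, w in k[x_0,...,x_3] and q_i = a_i l_1 + b_i l_2 (i=1,2), the matrix identity B_1 A_0 + B_0 A_1 = 0 holds, where B_0 = (-q_1, -l_1, w, 0; -q_2, -l_2, 0, w), A_0 = (w,0; 0,w; q_1,l_1; q_2,l_2)ᵀ-shaped 4×2 matrix with rows (w,0),(0,w),(q_1,l_1),(q_2,l_2), B_1 = (0,0,a_1,b_1; 0,0,a_2,b_2), and A_1 the 4×2 matrix with rows (a_1+b_2, 1), (b_1 a_2 - b_2 a_1, 0), (0,0), (0,0). -/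
open MvPolynomial Matrix

set_option maxHeartbeats 1600000 in
/-- the first-order deformation matrix identity
`B₁ A₀ + B₀ A₁ = 0` for the explicit matrices of linear and quadratic
forms over `k[x₀,…,x₃]`, where `qᵢ = aᵢ l₁ + bᵢ l₂`. -/
theorem deformation_matrix_identity
    (k : Type*) [Field k]
    (a₁ b₁ a₂ b₂ l₁ l₂ w : MvPolynomial (Fin 4) k)
    (q₁ q₂ : MvPolynomial (Fin 4) k)
    (hq₁ : q₁ = a₁ * l₁ + b₁ * l₂) (hq₂ : q₂ = a₂ * l₁ + b₂ * l₂) :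
    let B₀ : Matrix (Fin 2) (Fin 4) (MvPolynomial (Fin 4) k) :=
      !![-q₁, -l₁, w, 0; -q₂, -l₂, 0, w]
    let A₀ : Matrix (Fin 4) (Fin 2) (MvPolynomial (Fin 4) k) :=
      !![w, 0; 0, w; q₁, l₁; q₂, l₂]
    let B₁ : Matrix (Fin 2) (Fin 4) (MvPolynomial (Fin 4) k) :=
      !![0, 0, a₁, b₁; 0, 0, a₂, b₂]
    let A₁ : Matrix (Fin 4) (Fin 2) (MvPolynomial (Fin 4) k) :=
      !![a₁ + b₂, 1; b₁ * a₂ - b₂ * a₁, 0; 0, 0; 0, 0]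
    B₁ * A₀ + B₀ * A₁ = 0 := by
  intro B₀ A₀ B₁ A₁
  apply Matrix.ext
  intro i j
  fin_cases i <;> fin_cases j <;>
    · simp [B₀, A₀, B₁, A₁, Matrix.mul_apply, Fin.sum_univ_four]
      subst hq₁ hq₂; ring
end

section
/- With notation as above (q_i = a_i l_1 + b_i l_2), for every scalar t the matrix product (B_0 + t B_1)(A_0 + t A_1) = 0, i.e. the deformed pair still forms a complex for all t. -/
open MvPolynomial Matrix

/-- with `qᵢ = aᵢ l₁ + bᵢ l₂`, for every scalar `t` the deformed
pair still forms a complex: `(B₀ + t B₁)(A₀ + t A₁) = 0`. -/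
theorem deformed_pair_is_complex
    (k : Type*) [Field k]
    (a₁ b₁ a₂ b₂ l₁ l₂ w : MvPolynomial (Fin 4) k)
    (q₁ q₂ : MvPolynomial (Fin 4) k)
    (hq₁ : q₁ = a₁ * l₁ + b₁ * l₂) (hq₂ : q₂ = a₂ * l₁ + b₂ * l₂)
    (t : k) :
    let B₀ : Matrix (Fin 2) (Fin 4) (MvPolynomial (Fin 4) k) :=
      !![-q₁, -l₁, w, 0; -q₂, -l₂, 0, w]
    let A₀ : Matrix (Fin 4) (Fin 2) (MvPolynomial (Fin 4) k) :=
      !![w, 0; 0, w; q₁, l₁; q₂, l₂]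
    let B₁ : Matrix (Fin 2) (Fin 4) (MvPolynomial (Fin 4) k) :=
      !![0, 0, a₁, b₁; 0, 0, a₂, b₂]
    let A₁ : Matrix (Fin 4) (Fin 2) (MvPolynomial (Fin 4) k) :=
      !![a₁ + b₂, 1; b₁ * a₂ - b₂ * a₁, 0; 0, 0; 0, 0]
    (B₀ + (C t : MvPolynomial (Fin 4) k) • B₁) * (A₀ + (C t : MvPolynomial (Fin 4) k) • A₁) = 0 := by
  subst hq₁ hq₂
  intro B₀ A₀ B₁ A₁
  refine Matrix.ext fun i j => ?_
  fin_cases i <;> fin_cases j <;>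
    · simp only [B₀, A₀, B₁, A₁, Matrix.mul_apply, Fin.sum_univ_four, Matrix.add_apply,
        Matrix.smul_apply, Matrix.zero_apply, smul_eq_mul]
      norm_num [Matrix.cons_val_zero, Matrix.cons_val_one, Matrix.head_cons, Matrix.vecHead, Matrix.vecTail, Matrix.cons_val, Matrix.cons_val_two, Matrix.cons_val_three]
      ring
end

section
/- The ring ℤ[s,t,u]/(s⁴, t³-st²+s²t-s³, f), with f = u⁹ + (10s-3t)u⁸ + (55s²-30st+9t²)u⁷ + (220s³-165s²t+90st²)u⁶ + (495s²t²-660s³t)u⁵ + 1980s³t²u⁴, is a free ℤ-module of rank 108 with graded Betti numbers 1, 3, 6, 9, 11, 12, 12, 12, 12, 11, 9, 6, 3, 1 in degrees 0 through 13. -/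
noncomputable section
section Tower
open Polynomial
abbrev R1 := AdjoinRoot ((X : ℤ[X])^4)
def r1 : R1 := AdjoinRoot.root _
lemma r1_pow : r1 ^ 4 = 0 := by
  have h : AdjoinRoot.mk ((X:ℤ[X])^4) ((X:ℤ[X])^4) = 0 := AdjoinRoot.mk_self
  rwa [map_pow, AdjoinRoot.mk_X] at h
def q2 : R1[X] := X^3 - C r1 * X^2 + C (r1^2) * X - C (r1^3)
lemma q2_monic : q2.Monic := by unfold q2; monicity!
abbrev R2 := AdjoinRoot q2
def r2 : R2 := AdjoinRoot.root _
def s2 : R2 := algebraMap R1 R2 r1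
lemma s2_pow : s2 ^ 4 = 0 := by rw [s2, ← map_pow, r1_pow, map_zero]
lemma r2_rel : r2^3 - s2*r2^2 + s2^2*r2 - s2^3 = 0 := by
  have h : AdjoinRoot.mk q2 (X^3 - C r1 * X^2 + C (r1^2) * X - C (r1^3)) = 0 := by
    rw [← q2]; exact AdjoinRoot.mk_self
  simp only [map_sub, map_add, map_mul, map_pow, AdjoinRoot.mk_X, AdjoinRoot.mk_C] at h
  simpa only [s2, r2, AdjoinRoot.algebraMap_eq, map_pow] using h
def q3 : R2[X] := X^9 + C (10*s2 - 3*r2) * X^8 + C (55*s2^2 - 30*s2*r2 + 9*r2^2) * X^7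
  + C (220*s2^3 - 165*s2^2*r2 + 90*s2*r2^2) * X^6
  + C (495*s2^2*r2^2 - 660*s2^3*r2) * X^5 + C (1980*s2^3*r2^2) * X^4
lemma q3_monic : q3.Monic := by unfold q3; monicity!
abbrev R3 := AdjoinRoot q3
def e3 : R3 := AdjoinRoot.root _
def e2 : R3 := algebraMap R2 R3 r2
def e1 : R3 := algebraMap R2 R3 s2
lemma e1_pow : e1 ^ 4 = 0 := by rw [e1, ← map_pow, s2_pow, map_zero]
lemma e2_rel : e2^3 - e1*e2^2 + e1^2*e2 - e1^3 = 0 := by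
  have h := congrArg (algebraMap R2 R3) r2_rel
  simpa only [map_sub, map_add, map_mul, map_pow, map_zero, e1, e2] using h
lemma e3_rel : e3^9 + (10*e1 - 3*e2)*e3^8 + (55*e1^2 - 30*e1*e2 + 9*e2^2)*e3^7
    + (220*e1^3 - 165*e1^2*e2 + 90*e1*e2^2)*e3^6
    + (495*e1^2*e2^2 - 660*e1^3*e2)*e3^5 + 1980*e1^3*e2^2*e3^4 = 0 := by
  have h : AdjoinRoot.mk q3 (X^9 + C (10*s2 - 3*r2) * X^8 + C (55*s2^2 - 30*s2*r2 + 9*r2^2) * X^7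
      + C (220*s2^3 - 165*s2^2*r2 + 90*s2*r2^2) * X^6
      + C (495*s2^2*r2^2 - 660*s2^3*r2) * X^5 + C (1980*s2^3*r2^2) * X^4) = 0 := by
    rw [← q3]; exact AdjoinRoot.mk_self
  simp only [map_add, map_sub, map_mul, map_pow, map_ofNat, AdjoinRoot.mk_X, AdjoinRoot.mk_C] at h
  rw [e1, e2, e3, AdjoinRoot.algebraMap_eq]
  linear_combination h
def pb1 : PowerBasis ℤ R1 := AdjoinRoot.powerBasis' (monic_X_pow 4)
def pb2 : PowerBasis R1 R2 := AdjoinRoot.powerBasis' q2_monic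
def pb3 : PowerBasis R2 R3 := AdjoinRoot.powerBasis' q3_monic
def chi1 : R1 →+* ℤ := AdjoinRoot.lift (RingHom.id ℤ) 0 (by simp)
lemma chi1_r1 : chi1 r1 = 0 := AdjoinRoot.lift_root _
instance : Nontrivial R1 := chi1.domain_nontrivial
def chi2 : R2 →+* ℤ := AdjoinRoot.lift chi1 0 (by
  simp only [q2, eval₂_sub, eval₂_add, eval₂_mul, eval₂_pow, eval₂_C, eval₂_X, map_pow, chi1_r1]
  ring)
lemma chi2_r2 : chi2 r2 = 0 := AdjoinRoot.lift_root _
lemma chi2_s2 : chi2 s2 = 0 := by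
  rw [s2, AdjoinRoot.algebraMap_eq, chi2, AdjoinRoot.lift_of, chi1_r1]
instance : Nontrivial R2 := chi2.domain_nontrivial
def chi3 : R3 →+* ℤ := AdjoinRoot.lift chi2 0 (by
  simp only [q3, eval₂_add, eval₂_mul, eval₂_pow, eval₂_C, eval₂_X]
  ring)
instance : Nontrivial R3 := chi3.domain_nontrivial
lemma hdim1 : pb1.dim = 4 := by simp [pb1]

lemma hdim2 : pb2.dim = 3 := by rw [pb2, AdjoinRoot.powerBasis'_dim]; unfold q2; compute_degree!
lemma hdim3 : pb3.dim = 9 := by rw [pb3, AdjoinRoot.powerBasis'_dim]; unfold q3; compute_degree!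
def B0 : Module.Basis ((Fin pb1.dim × Fin pb2.dim) × Fin pb3.dim) ℤ R3 :=
  (pb1.basis.smulTower pb2.basis).smulTower pb3.basis
def eIdx : ((Fin pb1.dim × Fin pb2.dim) × Fin pb3.dim) ≃ (Fin 4 × Fin 3 × Fin 9) :=
  (((finCongr hdim1).prodCongr (finCongr hdim2)).prodCongr (finCongr hdim3)).trans
    (Equiv.prodAssoc _ _ _)
def B : Module.Basis (Fin 4 × Fin 3 × Fin 9) ℤ R3 := B0.reindex eIdx
lemma B_apply (p : Fin 4 × Fin 3 × Fin 9) :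
    B p = e1^(p.1:ℕ) * e2^(p.2.1:ℕ) * e3^(p.2.2:ℕ) := by
  obtain ⟨a, b, c⟩ := p
  rw [B, Module.Basis.reindex_apply]
  have hsymm : eIdx.symm (a, b, c) = ((Fin.cast hdim1.symm a, Fin.cast hdim2.symm b),
      Fin.cast hdim3.symm c) := rfl
  rw [hsymm, B0, Module.Basis.smulTower_apply, Module.Basis.smulTower_apply,
    PowerBasis.basis_eq_pow, PowerBasis.basis_eq_pow, PowerBasis.basis_eq_pow,
    Algebra.smul_def, Algebra.smul_def, map_mul]
  simp only [pb1, pb2, pb3, AdjoinRoot.powerBasis'_gen, map_pow, Fin.coe_cast,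
    e1, e2, e3, s2, r1, r2, IsScalarTower.algebraMap_apply R1 R2 R3, mul_assoc]
  rfl
end Tower
section Poly
open MvPolynomial
def sP : MvPolynomial (Fin 3) ℤ := X 0
def tP : MvPolynomial (Fin 3) ℤ := X 1
def uP : MvPolynomial (Fin 3) ℤ := X 2
def fP : MvPolynomial (Fin 3) ℤ :=
  uP^9 + (10*sP - 3*tP)*uP^8 + (55*sP^2 - 30*sP*tP + 9*tP^2)*uP^7
    + (220*sP^3 - 165*sP^2*tP + 90*sP*tP^2)*uP^6
    + (495*sP^2*tP^2 - 660*sP^3*tP)*uP^5 + 1980*sP^3*tP^2*uP^4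
def IP : Ideal (MvPolynomial (Fin 3) ℤ) :=
  Ideal.span {sP^4, tP^3 - sP*tP^2 + sP^2*tP - sP^3, fP}
def Red (d : ℕ) : Submodule ℤ (MvPolynomial (Fin 3) ℤ) :=
  Submodule.span ℤ {m | ∃ a b c : ℕ, a < 4 ∧ b < 3 ∧ c < 9 ∧ a + b + c = d ∧
    m = sP^a * tP^b * uP^c}
def KK (d : ℕ) : Submodule ℤ (MvPolynomial (Fin 3) ℤ) := Red d ⊔ IP.restrictScalars ℤ

lemma IP_le_KK {d : ℕ} {x : MvPolynomial (Fin 3) ℤ} (hx : x ∈ IP) : x ∈ KK d :=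
  le_sup_right (α := Submodule ℤ (MvPolynomial (Fin 3) ℤ)) hx

lemma sP4_mem : sP^4 ∈ IP := Ideal.subset_span (Set.mem_insert _ _)
lemma tP3_mem : tP^3 - sP*tP^2 + sP^2*tP - sP^3 ∈ IP :=
  Ideal.subset_span (Set.mem_insert_of_mem _ (Set.mem_insert _ _))
lemma fP_mem : fP ∈ IP :=
  Ideal.subset_span (Set.mem_insert_of_mem _ (Set.mem_insert_of_mem _ rfl))

lemma mem_KK : ∀ c b a d : ℕ, a + b + c = d → sP^a * tP^b * uP^c ∈ KK d := by
  intro c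
  induction c using Nat.strong_induction_on with
  | _ c ihc =>
    intro b
    induction b using Nat.strong_induction_on with
    | _ b ihb =>
      intro a d hd
      rcases Nat.lt_or_ge c 9 with hc | hc
      · rcases Nat.lt_or_ge b 3 with hb | hb
        · rcases Nat.lt_or_ge a 4 with ha | ha
          · -- reduced monomial
            exact le_sup_left (α := Submodule ℤ (MvPolynomial (Fin 3) ℤ))
              (Submodule.subset_span ⟨a, b, c, ha, hb, hc, hd, rfl⟩)
          · -- a ≥ 4
            obtain ⟨a', rfl⟩ : ∃ a', a = a' + 4 := ⟨a - 4, by omega⟩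
            apply IP_le_KK
            have : sP^(a'+4) * tP^b * uP^c = (sP^a' * tP^b * uP^c) * sP^4 := by ring
            rw [this]
            exact Ideal.mul_mem_left _ _ sP4_mem
        · -- b ≥ 3
          obtain ⟨b', rfl⟩ : ∃ b', b = b' + 3 := ⟨b - 3, by omega⟩
          have key : sP^a * tP^(b'+3) * uP^c =
              (sP^a * tP^b' * uP^c) * (tP^3 - sP*tP^2 + sP^2*tP - sP^3)
              + ((1:ℤ) • (sP^(a+1) * tP^(b'+2) * uP^c)
                + ((-1:ℤ) • (sP^(a+2) * tP^(b'+1) * uP^c)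
                + (1:ℤ) • (sP^(a+3) * tP^b' * uP^c))) := by
            simp only [zsmul_eq_mul]; push_cast; ring
          rw [key]
          refine add_mem (IP_le_KK (Ideal.mul_mem_left _ _ tP3_mem)) ?_
          refine add_mem (Submodule.smul_mem _ _ (ihb (b'+2) (by omega) (a+1) d (by omega))) ?_
          refine add_mem (Submodule.smul_mem _ _ (ihb (b'+1) (by omega) (a+2) d (by omega))) ?_
          exact Submodule.smul_mem _ _ (ihb b' (by omega) (a+3) d (by omega))
      · -- c ≥ 9
        obtain ⟨c', rfl⟩ : ∃ c', c = c' + 9 := ⟨c - 9, by omega⟩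
        have key : sP^a * tP^b * uP^(c'+9) =
            (sP^a * tP^b * uP^c') * fP
            + ((-10:ℤ) • (sP^(a+1) * tP^b * uP^(c'+8))
            + ((3:ℤ) • (sP^a * tP^(b+1) * uP^(c'+8))
            + ((-55:ℤ) • (sP^(a+2) * tP^b * uP^(c'+7))
            + ((30:ℤ) • (sP^(a+1) * tP^(b+1) * uP^(c'+7))
            + ((-9:ℤ) • (sP^a * tP^(b+2) * uP^(c'+7))
            + ((-220:ℤ) • (sP^(a+3) * tP^b * uP^(c'+6))
            + ((165:ℤ) • (sP^(a+2) * tP^(b+1) * uP^(c'+6))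
            + ((-90:ℤ) • (sP^(a+1) * tP^(b+2) * uP^(c'+6))
            + ((660:ℤ) • (sP^(a+3) * tP^(b+1) * uP^(c'+5))
            + ((-495:ℤ) • (sP^(a+2) * tP^(b+2) * uP^(c'+5))
            + (-1980:ℤ) • (sP^(a+3) * tP^(b+2) * uP^(c'+4)))))))))))) := by
          simp only [zsmul_eq_mul, fP]; push_cast; ring
        rw [key]
        refine add_mem (IP_le_KK (Ideal.mul_mem_left _ _ fP_mem)) ?_
        refine add_mem (Submodule.smul_mem _ _ (ihc (c'+8) (by omega) b (a+1) d (by omega))) ?_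
        refine add_mem (Submodule.smul_mem _ _ (ihc (c'+8) (by omega) (b+1) a d (by omega))) ?_
        refine add_mem (Submodule.smul_mem _ _ (ihc (c'+7) (by omega) b (a+2) d (by omega))) ?_
        refine add_mem (Submodule.smul_mem _ _ (ihc (c'+7) (by omega) (b+1) (a+1) d (by omega))) ?_
        refine add_mem (Submodule.smul_mem _ _ (ihc (c'+7) (by omega) (b+2) a d (by omega))) ?_
        refine add_mem (Submodule.smul_mem _ _ (ihc (c'+6) (by omega) b (a+3) d (by omega))) ?_
        refine add_mem (Submodule.smul_mem _ _ (ihc (c'+6) (by omega) (b+1) (a+2) d (by omega))) ?_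
        refine add_mem (Submodule.smul_mem _ _ (ihc (c'+6) (by omega) (b+2) (a+1) d (by omega))) ?_
        refine add_mem (Submodule.smul_mem _ _ (ihc (c'+5) (by omega) (b+1) (a+3) d (by omega))) ?_
        refine add_mem (Submodule.smul_mem _ _ (ihc (c'+5) (by omega) (b+2) (a+2) d (by omega))) ?_
        exact Submodule.smul_mem _ _ (ihc (c'+4) (by omega) (b+2) (a+3) d (by omega))
lemma monomial_eq_smul (m : Fin 3 →₀ ℕ) (z : ℤ) :
    monomial m z = z • (sP^(m 0) * tP^(m 1) * uP^(m 2)) := by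
  rw [monomial_eq, Finsupp.prod_fintype _ _ (fun i => pow_zero _), Fin.prod_univ_three,
    zsmul_eq_mul]
  simp [sP, tP, uP]

lemma degree_three (m : Fin 3 →₀ ℕ) : m.degree = m 0 + m 1 + m 2 := by
  rw [Finsupp.degree_apply, Finset.sum_subset (Finset.subset_univ _)
    (fun i _ h => Finsupp.notMem_support_iff.mp h), Fin.sum_univ_three]

lemma monomial_isHomog (a b c : ℕ) :
    sP^a * tP^b * uP^c ∈ homogeneousSubmodule (Fin 3) ℤ (a + b + c) := by
  rw [mem_homogeneousSubmodule]
  exact ((isHomogeneous_X_pow 0 a).mul (isHomogeneous_X_pow 1 b)).mul (isHomogeneous_X_pow 2 c)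
end Poly

section Quotient
open MvPolynomial

lemma homog_le_KK (d : ℕ) : homogeneousSubmodule (Fin 3) ℤ d ≤ KK d := by
  intro P hP
  rw [mem_homogeneousSubmodule] at hP
  rw [← support_sum_monomial_coeff P]
  apply Submodule.sum_mem
  intro m hm
  rw [monomial_eq_smul]
  apply Submodule.smul_mem
  have h1 := hP (mem_support_iff.mp hm)
  have h2 : m 0 + m 1 + m 2 = d := by
    rw [← degree_three, Finsupp.degree_eq_weight_one]
    exact h1
  exact mem_KK _ _ _ _ h2

def mkL : MvPolynomial (Fin 3) ℤ →ₗ[ℤ] (MvPolynomial (Fin 3) ℤ ⧸ IP) :=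
  (Ideal.Quotient.mkₐ ℤ IP).toLinearMap

def vv : Fin 4 × Fin 3 × Fin 9 → (MvPolynomial (Fin 3) ℤ ⧸ IP) :=
  fun p => Ideal.Quotient.mkₐ ℤ IP (sP^(p.1:ℕ) * tP^(p.2.1:ℕ) * uP^(p.2.2:ℕ))

def Sd (d : ℕ) : Set (Fin 4 × Fin 3 × Fin 9) :=
  {p | (p.1:ℕ) + (p.2.1:ℕ) + (p.2.2:ℕ) = d}

lemma map_KK_le (d : ℕ) :
    Submodule.map mkL (KK d) ≤ Submodule.span ℤ (vv '' Sd d) := by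
  rw [KK, Submodule.map_sup]
  apply sup_le
  · rw [Red, Submodule.map_span]
    apply Submodule.span_le.mpr
    rintro y ⟨x, ⟨a, b, c, ha, hb, hc, hd, rfl⟩, rfl⟩
    exact Submodule.subset_span ⟨(⟨a, ha⟩, ⟨b, hb⟩, ⟨c, hc⟩), hd, rfl⟩
  · rintro y ⟨x, hx, rfl⟩
    have hz : mkL x = 0 := Ideal.Quotient.eq_zero_iff_mem.mpr hx
    rw [hz]; exact zero_mem _

lemma piece_eq (d : ℕ) :
    Submodule.map mkL (homogeneousSubmodule (Fin 3) ℤ d) = Submodule.span ℤ (vv '' Sd d) := by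
  apply le_antisymm
  · exact le_trans (Submodule.map_mono (homog_le_KK d)) (map_KK_le d)
  · apply Submodule.span_le.mpr
    rintro y ⟨⟨a, b, c⟩, hp, rfl⟩
    have hp' : (a:ℕ) + (b:ℕ) + (c:ℕ) = d := hp
    exact ⟨sP^(a:ℕ) * tP^(b:ℕ) * uP^(c:ℕ), by rw [← hp']; exact monomial_isHomog _ _ _, rfl⟩

def ψ : MvPolynomial (Fin 3) ℤ →ₐ[ℤ] R3 := aeval ![e1, e2, e3]

lemma ψ_ker : ∀ a ∈ IP, ψ a = 0 := by
  intro a ha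
  rw [IP] at ha
  refine Submodule.span_induction (fun x hx => ?_) (map_zero _)
    (fun x y _ _ hx hy => by rw [map_add, hx, hy, add_zero])
    (fun r x _ hx => by rw [smul_eq_mul, map_mul, hx, mul_zero]) ha
  simp only [Set.mem_insert_iff, Set.mem_singleton_iff] at hx
  rcases hx with rfl | rfl | rfl
  · simp only [ψ, sP, map_pow, aeval_X]
    simpa using e1_pow
  · simp only [ψ, sP, tP, map_sub, map_add, map_mul, map_pow, aeval_X]
    simpa using e2_rel
  · simp only [ψ, fP, sP, tP, uP, map_add, map_sub, map_mul, map_pow, map_ofNat, aeval_X, Matrix.cons_val_zero, Matrix.cons_val_one, Matrix.head_cons,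
      Matrix.cons_val_two, Matrix.tail_cons]
    linear_combination e3_rel

def φQ : (MvPolynomial (Fin 3) ℤ ⧸ IP) →ₐ[ℤ] R3 := Ideal.Quotient.liftₐ IP ψ ψ_ker

lemma φQ_vv (p : Fin 4 × Fin 3 × Fin 9) : φQ (vv p) = B p := by
  obtain ⟨a, b, c⟩ := p
  have h : φQ (vv (a, b, c)) = ψ (sP^(a:ℕ) * tP^(b:ℕ) * uP^(c:ℕ)) := by
    rw [vv]
    exact AlgHom.congr_fun (Ideal.Quotient.liftₐ_comp IP ψ ψ_ker) _
  rw [h, B_apply]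
  simp [ψ, sP, tP, uP, map_mul, map_pow, aeval_X]

lemma vv_li : LinearIndependent ℤ vv := by
  apply LinearIndependent.of_comp φQ.toLinearMap
  have : (φQ.toLinearMap ∘ vv) = B := by funext p; exact φQ_vv p
  rw [this]
  exact B.linearIndependent

lemma span_vv : Submodule.span ℤ (Set.range vv) = ⊤ := by
  rw [eq_top_iff]
  intro y _
  obtain ⟨P, rfl⟩ := Ideal.Quotient.mkₐ_surjective ℤ IP y
  show mkL P ∈ _
  rw [← support_sum_monomial_coeff P, map_sum]
  apply Submodule.sum_mem
  intro m _
  rw [monomial_eq_smul, map_smul]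
  apply Submodule.smul_mem
  refine Submodule.span_mono (Set.image_subset_range vv (Sd (m 0 + m 1 + m 2)))
    (map_KK_le _ ⟨_, mem_KK _ _ _ _ rfl, rfl⟩)

def basisQ : Module.Basis (Fin 4 × Fin 3 × Fin 9) ℤ (MvPolynomial (Fin 3) ℤ ⧸ IP) :=
  Module.Basis.mk vv_li (by rw [span_vv])

lemma free_quot : Module.Free ℤ (MvPolynomial (Fin 3) ℤ ⧸ IP) := Module.Free.of_basis basisQ

lemma finrank_quot : Module.finrank ℤ (MvPolynomial (Fin 3) ℤ ⧸ IP) = 108 := by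
  rw [Module.finrank_eq_card_basis basisQ]
  simp

lemma finrank_piece (d : ℕ) :
    Module.finrank ℤ (Submodule.map mkL (homogeneousSubmodule (Fin 3) ℤ d)) =
      Fintype.card {p : Fin 4 × Fin 3 × Fin 9 // (p.1:ℕ) + (p.2.1:ℕ) + (p.2.2:ℕ) = d} := by
  rw [piece_eq]
  have hr : vv '' Sd d = Set.range (vv ∘ (Subtype.val :
      {p : Fin 4 × Fin 3 × Fin 9 // (p.1:ℕ) + (p.2.1:ℕ) + (p.2.2:ℕ) = d} → _)) := by
    rw [Set.range_comp, Subtype.range_coe_subtype]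
    rfl
  rw [hr]
  exact finrank_span_eq_card (vv_li.comp Subtype.val Subtype.val_injective)

lemma piece_bot (d : ℕ) (hd : 14 ≤ d) :
    Submodule.map mkL (homogeneousSubmodule (Fin 3) ℤ d) = ⊥ := by
  rw [piece_eq]
  have : Sd d = ∅ := by
    ext ⟨a, b, c⟩
    simp only [Sd, Set.mem_setOf_eq, Set.mem_empty_iff_false, iff_false]
    have := a.isLt; have := b.isLt; have := c.isLt
    omega
  rw [this, Set.image_empty, Submodule.span_empty]
end Quotient

open MvPolynomial

/-- `ℤ[s,t,u]/(s⁴, t³-st²+s²t-s³, f)` (with `f` the explicit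
degree-9 relation) is a free `ℤ`-module of rank 108 with graded Betti
numbers 1,3,6,9,11,12,12,12,12,11,9,6,3,1 in degrees 0–13. -/
theorem chow_ring_M1_betti :
    let s : MvPolynomial (Fin 3) ℤ := X 0
    let t : MvPolynomial (Fin 3) ℤ := X 1
    let u : MvPolynomial (Fin 3) ℤ := X 2
    let f : MvPolynomial (Fin 3) ℤ :=
      u^9 + (10*s - 3*t)*u^8 + (55*s^2 - 30*s*t + 9*t^2)*u^7
        + (220*s^3 - 165*s^2*t + 90*s*t^2)*u^6
        + (495*s^2*t^2 - 660*s^3*t)*u^5 + 1980*s^3*t^2*u^4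
    let I : Ideal (MvPolynomial (Fin 3) ℤ) :=
      Ideal.span {s^4, t^3 - s*t^2 + s^2*t - s^3, f}
    let piece : ℕ → Submodule ℤ (MvPolynomial (Fin 3) ℤ ⧸ I) := fun d =>
      Submodule.map (Ideal.Quotient.mkₐ ℤ I).toLinearMap
        (homogeneousSubmodule (Fin 3) ℤ d)
    Module.Free ℤ (MvPolynomial (Fin 3) ℤ ⧸ I) ∧
    Module.finrank ℤ (MvPolynomial (Fin 3) ℤ ⧸ I) = 108 ∧
    (∀ d : Fin 14, Module.finrank ℤ (piece d) =
      [1,3,6,9,11,12,12,12,12,11,9,6,3,1].get d) ∧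
    ∀ d, 14 ≤ d → piece d = ⊥ := by
  intro s t u f I piece
  refine ⟨free_quot, finrank_quot, ?_, ?_⟩
  · intro d
    have h : Module.finrank ℤ (piece (d : ℕ)) =
        Fintype.card {p : Fin 4 × Fin 3 × Fin 9 // (p.1:ℕ) + (p.2.1:ℕ) + (p.2.2:ℕ) = (d:ℕ)} :=
      finrank_piece (d : ℕ)
    rw [h]
    fin_cases d <;> decide
  · intro d hd
    exact piece_bot d hd
end
end

section
/- Let k be a field of characteristic 0 and let Q = (l_1, w, 0; l_2, 0, w) be a 2×3 matrix of linear forms in four variables with w, l_1, l_2 linearly independent. Let F_Q = {SQ - QR : S ∈ gl_2(k), R ∈ gl_3(k)} ⊂ Hom(k², k³ ⊗ V*) and let T'_Q be the 5-dimensional space of matrices (ρl_3, λ_1l_1+λ_2l_2+λ_3l_3, 0; σl_3, 0, λ_1l_1+λ_2l_2+λ_3l_3) where l_3 is a fixed linear form making w,l_1,l_2,l_3 a basis of V*. Then T'_Q ∩ F_Q = 0. -/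
open Matrix

/-- for `Q = (l₁, w, 0; l₂, 0, w)` with `w, l₁, l₂, l₃` a
linearly independent family of linear forms, the slice space `T'_Q`
(matrices `(ρl₃, λ₁l₁+λ₂l₂+λ₃l₃, 0; σl₃, 0, λ₁l₁+λ₂l₂+λ₃l₃)`) meets the
orbit tangent space `F_Q = {SQ - QR}` only in `0`. -/
theorem slice_meets_orbit_trivially
    (k : Type*) [Field k] [CharZero k]
    (W : Type*) [AddCommGroup W] [Module k W]
    (w l₁ l₂ l₃ : W) (hind : LinearIndependent k ![w, l₁, l₂, l₃])
    (M : Matrix (Fin 2) (Fin 3) W)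
    (hT : ∃ ρ σ lam₁ lam₂ lam₃ : k,
      M = Matrix.of ![![ρ • l₃, lam₁ • l₁ + lam₂ • l₂ + lam₃ • l₃, 0],
                      ![σ • l₃, 0, lam₁ • l₁ + lam₂ • l₂ + lam₃ • l₃]])
    (hF : ∃ (S : Matrix (Fin 2) (Fin 2) k) (R : Matrix (Fin 3) (Fin 3) k),
      ∀ i j, M i j =
        (∑ m : Fin 2, S i m • (Matrix.of ![![l₁, w, 0], ![l₂, 0, w]]) m j)
        - (∑ m : Fin 3, R m j • (Matrix.of ![![l₁, w, 0], ![l₂, 0, w]]) i m)) :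
    M = 0 := by
  obtain ⟨ρ, σ, lam₁, lam₂, lam₃, hM⟩ := hT
  obtain ⟨S, R, hSR⟩ := hF
  have key : ∀ a b c d : k, a • w + b • l₁ + c • l₂ + d • l₃ = 0 →
      a = 0 ∧ b = 0 ∧ c = 0 ∧ d = 0 := by
    intro a b c d h
    have h2 := Fintype.linearIndependent_iff.mp hind ![a, b, c, d] (by
      simpa [Fin.sum_univ_four, add_assoc] using h)
    exact ⟨h2 0, h2 1, h2 2, h2 3⟩
  have e00 := hSR 0 0
  have e01 := hSR 0 1
  have e10 := hSR 1 0
  have e11 := hSR 1 1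
  rw [hM] at e00 e01 e10 e11
  simp [Fin.sum_univ_two, Fin.sum_univ_three] at e00 e01 e10 e11
  -- e00 : ρ • l₃ = (S 0 0 • l₁ + S 0 1 • l₂) - (R 0 0 • l₁ + R 1 0 • w)
  have h00 := key (-(R 1 0)) (S 0 0 - R 0 0) (S 0 1) (-ρ) (by
    rw [neg_smul, sub_smul, neg_smul]
    abel_nf
    linear_combination (norm := module) -e00)
  have h10 := key (-(R 2 0)) (S 1 0) (S 1 1 - R 0 0) (-σ) (by
    rw [neg_smul, sub_smul, neg_smul]
    linear_combination (norm := module) -e10)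
  have h01 := key (S 0 0 - R 1 1) (-(R 0 1) - lam₁) (-lam₂) (-lam₃) (by
    rw [sub_smul, sub_smul, neg_smul, neg_smul, neg_smul]
    linear_combination (norm := module) -e01)
  have h11 := key (S 1 0 - R 2 1) 0 (-(R 0 1)) 0 (by
    rw [sub_smul, neg_smul, zero_smul, zero_smul]
    linear_combination (norm := module) -e11)
  have hρ : ρ = 0 := by linear_combination -h00.2.2.2
  have hσ : σ = 0 := by linear_combination -h10.2.2.2
  have hR01 : R 0 1 = 0 := neg_eq_zero.mp h11.2.2.1
  have hlam₁ : lam₁ = 0 := by linear_combination -h01.2.1 - hR01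
  have hlam₂ : lam₂ = 0 := neg_eq_zero.mp h01.2.2.1
  have hlam₃ : lam₃ = 0 := neg_eq_zero.mp h01.2.2.2
  rw [hM, hρ, hσ, hlam₁, hlam₂, hlam₃]
  ext i j
  fin_cases i <;> fin_cases j <;> simp
end

section
/- With Q, F_Q, T'_Q as above, dim F_Q = 12, dim T'_Q = 5, and hence dim(Hom(k², k³⊗V*)/(T'_Q ⊕ F_Q)) = 24 - 17 = 7. -/
open Matrix Module

section aux
variable {k : Type*} [Field k] (w l₁ l₂ l₃ : Fin 4 → k)

/-- The matrix `Q`. -/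
def Qm : Matrix (Fin 2) (Fin 3) (Fin 4 → k) := Matrix.of ![![l₁, w, 0], ![l₂, 0, w]]

/-- The linear map `(S, R) ↦ SQ - QR`. -/
def LF : (Matrix (Fin 2) (Fin 2) k × Matrix (Fin 3) (Fin 3) k) →ₗ[k]
    Matrix (Fin 2) (Fin 3) (Fin 4 → k) where
  toFun p := Matrix.of fun i j =>
    (∑ m : Fin 2, p.1 i m • Qm w l₁ l₂ m j) - (∑ m : Fin 3, p.2 m j • Qm w l₁ l₂ i m)
  map_add' p q := by
    ext i j x
    simp [Fin.sum_univ_two, Fin.sum_univ_three, add_smul, Pi.add_apply, Pi.smul_apply]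
    ring
  map_smul' c p := by
    ext i j x
    simp [Fin.sum_univ_two, Fin.sum_univ_three, mul_smul, Pi.smul_apply]
    ring

/-- The linear parametrization of the slice `T'`. -/
def LTm : (Fin 5 → k) →ₗ[k] Matrix (Fin 2) (Fin 3) (Fin 4 → k) where
  toFun p := Matrix.of ![![p 0 • l₃, p 2 • l₁ + p 3 • l₂ + p 4 • l₃, 0],
                         ![p 1 • l₃, 0, p 2 • l₁ + p 3 • l₂ + p 4 • l₃]]
  map_add' p q := by
    ext i j x
    fin_cases i <;> fin_cases j <;>
      simp [add_smul, Pi.add_apply, Pi.smul_apply] <;> ring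
  map_smul' c p := by
    ext i j x
    fin_cases i <;> fin_cases j <;>
      simp [mul_smul, Pi.smul_apply] <;> ring

end aux

section lem
variable {k : Type*} [Field k] {w l₁ l₂ l₃ : Fin 4 → k}
  (hind : LinearIndependent k ![w, l₁, l₂, l₃])

include hind in
lemma hzero' {a b c d : k} (h : a • w + b • l₁ + c • l₂ + d • l₃ = 0) :
    a = 0 ∧ b = 0 ∧ c = 0 ∧ d = 0 := by
  have h2 := Fintype.linearIndependent_iff.mp hind ![a, b, c, d] ?_
  · exact ⟨h2 0, h2 1, h2 2, h2 3⟩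
  · simpa [Fin.sum_univ_four] using h

lemma spanF_eq :
    Submodule.span k {M : Matrix (Fin 2) (Fin 3) (Fin 4 → k) |
      ∃ (S : Matrix (Fin 2) (Fin 2) k) (R : Matrix (Fin 3) (Fin 3) k),
        ∀ i j, M i j = (∑ m : Fin 2, S i m • Qm w l₁ l₂ m j)
          - (∑ m : Fin 3, R m j • Qm w l₁ l₂ i m)} = LinearMap.range (LF w l₁ l₂) := by
  have hset : {M : Matrix (Fin 2) (Fin 3) (Fin 4 → k) |
      ∃ (S : Matrix (Fin 2) (Fin 2) k) (R : Matrix (Fin 3) (Fin 3) k),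
        ∀ i j, M i j = (∑ m : Fin 2, S i m • Qm w l₁ l₂ m j)
          - (∑ m : Fin 3, R m j • Qm w l₁ l₂ i m)}
      = ↑(LinearMap.range (LF w l₁ l₂)) := by
    ext M
    constructor
    · rintro ⟨S, R, h⟩
      exact ⟨(S, R), Matrix.ext fun i j => (h i j).symm⟩
    · rintro ⟨⟨S, R⟩, rfl⟩
      exact ⟨S, R, fun i j => rfl⟩
  rw [hset, Submodule.span_eq]

lemma spanT_eq :
    Submodule.span k {M : Matrix (Fin 2) (Fin 3) (Fin 4 → k) |
      ∃ ρ σ lam₁ lam₂ lam₃ : k,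
        M = Matrix.of ![![ρ • l₃, lam₁ • l₁ + lam₂ • l₂ + lam₃ • l₃, 0],
                        ![σ • l₃, 0, lam₁ • l₁ + lam₂ • l₂ + lam₃ • l₃]]}
      = LinearMap.range (LTm l₁ l₂ l₃) := by
  have hset : {M : Matrix (Fin 2) (Fin 3) (Fin 4 → k) |
      ∃ ρ σ lam₁ lam₂ lam₃ : k,
        M = Matrix.of ![![ρ • l₃, lam₁ • l₁ + lam₂ • l₂ + lam₃ • l₃, 0],
                        ![σ • l₃, 0, lam₁ • l₁ + lam₂ • l₂ + lam₃ • l₃]]}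
      = ↑(LinearMap.range (LTm l₁ l₂ l₃)) := by
    ext M
    constructor
    · rintro ⟨r, s, a, b, c, rfl⟩
      exact ⟨![r, s, a, b, c], rfl⟩
    · rintro ⟨p, rfl⟩
      exact ⟨p 0, p 1, p 2, p 3, p 4, rfl⟩
  rw [hset, Submodule.span_eq]

include hind in
lemma kerLT_eq : LinearMap.ker (LTm l₁ l₂ l₃) = ⊥ := by
  rw [eq_bot_iff]
  intro p hp
  have h := Matrix.ext_iff.mpr (LinearMap.mem_ker.mp hp)
  have h00 := h 0 0
  have h10 := h 1 0
  have h01 := h 0 1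
  simp only [LTm, LinearMap.coe_mk, AddHom.coe_mk, Matrix.of_apply, Matrix.cons_val',
    Matrix.cons_val_zero, Matrix.cons_val_one, Matrix.head_cons, Matrix.empty_val',
    Matrix.cons_val_fin_one, Matrix.zero_apply, Pi.zero_apply, Matrix.vecHead,
    Matrix.vecTail] at h00 h10 h01
  obtain ⟨-, -, -, e0⟩ := hzero' hind (a := 0) (b := 0) (c := 0) (d := p 0)
    (by linear_combination (norm := module) h00)
  obtain ⟨-, -, -, e1⟩ := hzero' hind (a := 0) (b := 0) (c := 0) (d := p 1)
    (by linear_combination (norm := module) h10)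
  obtain ⟨-, e2, e3, e4⟩ := hzero' hind (a := 0) (b := p 2) (c := p 3) (d := p 4)
    (by linear_combination (norm := module) h01)
  have : p = 0 := by funext i; fin_cases i <;> simpa using ‹_›
  simp [this]

include hind in
lemma kerLF_eq : LinearMap.ker (LF w l₁ l₂) =
    Submodule.span k {((1 : Matrix (Fin 2) (Fin 2) k), (1 : Matrix (Fin 3) (Fin 3) k))} := by
  apply le_antisymm
  · rintro ⟨S, R⟩ hp
    have h := Matrix.ext_iff.mpr (LinearMap.mem_ker.mp hp)
    have h00 := h 0 0; have h01 := h 0 1; have h02 := h 0 2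
    have h10 := h 1 0; have h11 := h 1 1; have h12 := h 1 2
    simp only [LF, Qm, LinearMap.coe_mk, AddHom.coe_mk, Fin.sum_univ_two, Fin.sum_univ_three,
      Matrix.of_apply, Matrix.cons_val', Matrix.cons_val_zero, Matrix.cons_val_one,
      Matrix.head_cons, Matrix.cons_val_two, Matrix.tail_cons, Matrix.vecHead, Matrix.vecTail,
      Matrix.empty_val', Matrix.cons_val_fin_one, Function.comp_apply, Fin.succ_zero_eq_one,
      Fin.succ_one_eq_two, Matrix.zero_apply, Pi.zero_apply,
      smul_zero, add_zero, zero_add] at h00 h01 h02 h10 h11 h12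
    obtain ⟨eA, eB, eC, -⟩ := hzero' hind (a := -R 1 0) (b := S 0 0 - R 0 0) (c := S 0 1) (d := 0)
      (by linear_combination (norm := module) h00)
    obtain ⟨eD, eE, -, -⟩ := hzero' hind (a := S 0 0 - R 1 1) (b := -R 0 1) (c := 0) (d := 0)
      (by linear_combination (norm := module) h01)
    obtain ⟨eF, eG, -, -⟩ := hzero' hind (a := S 0 1 - R 1 2) (b := -R 0 2) (c := 0) (d := 0)
      (by linear_combination (norm := module) h02)
    obtain ⟨eH, eI, eJ, -⟩ := hzero' hind (a := -R 2 0) (b := S 1 0) (c := S 1 1 - R 0 0) (d := 0)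
      (by linear_combination (norm := module) h10)
    obtain ⟨eK, -, eL, -⟩ := hzero' hind (a := S 1 0 - R 2 1) (b := 0) (c := -R 0 1) (d := 0)
      (by linear_combination (norm := module) h11)
    obtain ⟨eM, -, eN, -⟩ := hzero' hind (a := S 1 1 - R 2 2) (b := 0) (c := -R 0 2) (d := 0)
      (by linear_combination (norm := module) h12)
    refine Submodule.mem_span_singleton.mpr ⟨S 0 0, ?_⟩
    have f1 : S 0 1 = 0 := eC
    have f2 : S 1 0 = 0 := eI
    have f3 : S 1 1 = S 0 0 := by linear_combination eJ - eB
    have f4 : R 0 0 = S 0 0 := by linear_combination -eB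
    have f5 : R 1 1 = S 0 0 := by linear_combination -eD
    have f6 : R 2 2 = S 0 0 := by linear_combination -eM + eJ - eB
    have f7 : R 0 1 = 0 := by linear_combination -eE
    have f8 : R 0 2 = 0 := by linear_combination -eG
    have f9 : R 1 0 = 0 := by linear_combination -eA
    have f10 : R 1 2 = 0 := by linear_combination eC - eF
    have f11 : R 2 0 = 0 := by linear_combination -eH
    have f12 : R 2 1 = 0 := by linear_combination eI - eK
    have hS : S 0 0 • (1 : Matrix (Fin 2) (Fin 2) k) = S := by
      rw [Matrix.eta_fin_two S, f1, f2, f3, Matrix.one_fin_two]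
      simp
    have hR : S 0 0 • (1 : Matrix (Fin 3) (Fin 3) k) = R := by
      rw [Matrix.eta_fin_three R, f4, f5, f6, f7, f8, f9, f10, f11, f12, Matrix.one_fin_three]
      simp
    exact Prod.ext hS hR
  · rw [Submodule.span_le, Set.singleton_subset_iff]
    refine LinearMap.mem_ker.mpr ?_
    ext i j x
    fin_cases i <;> fin_cases j <;>
      simp [LF, Qm, Fin.sum_univ_two, Fin.sum_univ_three, Matrix.one_apply]

include hind in
lemma inf_eq_bot :
    LinearMap.range (LTm l₁ l₂ l₃) ⊓ LinearMap.range (LF w l₁ l₂) = ⊥ := by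
  rw [eq_bot_iff]
  rintro M hM
  obtain ⟨p, rfl⟩ := hM.1
  obtain ⟨⟨S, R⟩, hEq⟩ := hM.2
  have h := Matrix.ext_iff.mpr hEq
  have h00 := h 0 0; have h01 := h 0 1
  have h10 := h 1 0; have h11 := h 1 1
  simp only [LF, LTm, Qm, LinearMap.coe_mk, AddHom.coe_mk, Fin.sum_univ_two, Fin.sum_univ_three,
    Matrix.of_apply, Matrix.cons_val', Matrix.cons_val_zero, Matrix.cons_val_one,
    Matrix.head_cons, Matrix.cons_val_two, Matrix.tail_cons, Matrix.vecHead, Matrix.vecTail,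
    Matrix.empty_val', Matrix.cons_val_fin_one, Function.comp_apply, Fin.succ_zero_eq_one,
    Fin.succ_one_eq_two, smul_zero, add_zero, zero_add] at h00 h01 h10 h11
  obtain ⟨-, -, -, e0⟩ := hzero' hind (a := -R 1 0) (b := S 0 0 - R 0 0) (c := S 0 1) (d := -p 0)
    (by linear_combination (norm := module) h00)
  obtain ⟨-, -, -, e1⟩ := hzero' hind (a := -R 2 0) (b := S 1 0) (c := S 1 1 - R 0 0) (d := -p 1)
    (by linear_combination (norm := module) h10)
  obtain ⟨-, eb, e3, e4⟩ := hzero' hind (a := S 0 0 - R 1 1) (b := -R 0 1 - p 2) (c := -p 3)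
    (d := -p 4) (by linear_combination (norm := module) h01)
  obtain ⟨-, -, ec, -⟩ := hzero' hind (a := S 1 0 - R 2 1) (b := 0) (c := -R 0 1) (d := 0)
    (by linear_combination (norm := module) h11)
  have e2 : p 2 = 0 := by linear_combination ec - eb
  have e0' : p 0 = 0 := by linear_combination -e0
  have e1' : p 1 = 0 := by linear_combination -e1
  have e3' : p 3 = 0 := by linear_combination -e3
  have e4' : p 4 = 0 := by linear_combination -e4
  have hp : p = 0 := by funext i; fin_cases i <;> assumption
  simp [hp]

end lem

/-- `dim F_Q = 12`, `dim T'_Q = 5`, and the quotient of the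
24-dimensional space `Hom(k², k³⊗V*)` by `T'_Q ⊕ F_Q` has dimension 7. -/
theorem dims_of_slice_and_orbit
    (k : Type*) [Field k] [CharZero k]
    (w l₁ l₂ l₃ : Fin 4 → k) (hind : LinearIndependent k ![w, l₁, l₂, l₃]) :
    let Q : Matrix (Fin 2) (Fin 3) (Fin 4 → k) := Matrix.of ![![l₁, w, 0], ![l₂, 0, w]]
    let F : Submodule k (Matrix (Fin 2) (Fin 3) (Fin 4 → k)) :=
      Submodule.span k {M | ∃ (S : Matrix (Fin 2) (Fin 2) k) (R : Matrix (Fin 3) (Fin 3) k),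
        ∀ i j, M i j = (∑ m : Fin 2, S i m • Q m j) - (∑ m : Fin 3, R m j • Q i m)}
    let T' : Submodule k (Matrix (Fin 2) (Fin 3) (Fin 4 → k)) :=
      Submodule.span k {M | ∃ ρ σ lam₁ lam₂ lam₃ : k,
        M = Matrix.of ![![ρ • l₃, lam₁ • l₁ + lam₂ • l₂ + lam₃ • l₃, 0],
                        ![σ • l₃, 0, lam₁ • l₁ + lam₂ • l₂ + lam₃ • l₃]]}
    Module.finrank k F = 12 ∧ Module.finrank k T' = 5 ∧
    Module.finrank k (Matrix (Fin 2) (Fin 3) (Fin 4 → k)) = 24 ∧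
    Module.finrank k (Matrix (Fin 2) (Fin 3) (Fin 4 → k) ⧸ (T' ⊔ F)) = 7 := by
  intro Q F T'
  have hF : F = LinearMap.range (LF w l₁ l₂) := spanF_eq
  have hT : T' = LinearMap.range (LTm l₁ l₂ l₃) := spanT_eq
  have h11ne : ((1 : Matrix (Fin 2) (Fin 2) k), (1 : Matrix (Fin 3) (Fin 3) k)) ≠ 0 := by
    intro hc
    have := congrArg (fun q => q.1 0 0) hc
    simp [Matrix.one_apply] at this
  have rF : Module.finrank k F = 12 := by
    have hrn := (LF w l₁ l₂ (k := k)).finrank_range_add_finrank_ker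
    rw [kerLF_eq hind, finrank_span_singleton h11ne] at hrn
    have hdom : Module.finrank k (Matrix (Fin 2) (Fin 2) k × Matrix (Fin 3) (Fin 3) k) = 13 := by
      simp [Module.finrank_matrix]
    rw [hF]
    omega
  have rT : Module.finrank k T' = 5 := by
    have hrn := (LTm l₁ l₂ l₃ (k := k)).finrank_range_add_finrank_ker
    rw [kerLT_eq hind, finrank_bot] at hrn
    have hdom : Module.finrank k (Fin 5 → k) = 5 := by simp
    rw [hT]
    omega
  have rM : Module.finrank k (Matrix (Fin 2) (Fin 3) (Fin 4 → k)) = 24 := by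
    rw [Module.finrank_matrix]
    simp
  have hinf : T' ⊓ F = ⊥ := by
    rw [hT, hF]
    exact inf_eq_bot hind
  have rsup : Module.finrank k ↥(T' ⊔ F) = 17 := by
    have := Submodule.finrank_sup_add_finrank_inf_eq T' F
    rw [hinf, finrank_bot] at this
    omega
  have hquot := Submodule.finrank_quotient_add_finrank (T' ⊔ F)
  exact ⟨rF, rT, rM, by omega⟩
end

section
/- Let w, l_1, l_2 be linearly independent linear forms and q_1, q_2 quadratic forms in k[x_0,...,x_3]. If the sequence 0 → k² → Sym²V* ⊕ (k³⊗V*) induced by the matrix B = (-q_1, -l_1, w, 0; -q_2, -l_2, 0, w) (evaluated on degree-3 global sections) is such that the full complex pair (B, A) with A = (w,0; 0,w; q_1,l_1; q_2,l_2) is exact in the middle, then q_1 l_2 - q_2 l_1 ≠ 0. -/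
open MvPolynomial

/-- if the complex given by
`B = (-q₁,-l₁,w,0; -q₂,-l₂,0,w)` and `A = (w,0; 0,w; q₁,l₁; q₂,l₂)` is exact
in the middle on degree-3 global sections (every homogeneous element of
`ker Ã` lies in `im B̃`), then `q₁ l₂ - q₂ l₁ ≠ 0`. -/
theorem middle_exactness_implies_det_ne_zero
    (k : Type*) [Field k] [CharZero k]
    (w l₁ l₂ q₁ q₂ : MvPolynomial (Fin 4) k)
    (hw : w.IsHomogeneous 1) (hl₁ : l₁.IsHomogeneous 1) (hl₂ : l₂.IsHomogeneous 1)
    (hind : LinearIndependent k ![w, l₁, l₂])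
    (hq₁ : q₁.IsHomogeneous 2) (hq₂ : q₂.IsHomogeneous 2)
    (hexact : ∀ u v₁ v₂ v₃ : MvPolynomial (Fin 4) k,
      u.IsHomogeneous 2 → v₁.IsHomogeneous 1 → v₂.IsHomogeneous 1 →
      v₃.IsHomogeneous 1 →
      u * w + v₂ * q₁ + v₃ * q₂ = 0 → v₁ * w + v₂ * l₁ + v₃ * l₂ = 0 →
      ∃ a b : k,
        u = C a * (-q₁) + C b * (-q₂) ∧ v₁ = C a * (-l₁) + C b * (-l₂) ∧
        v₂ = C a * w ∧ v₃ = C b * w) :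
    q₁ * l₂ - q₂ * l₁ ≠ 0 := by
  intro hdet
  obtain ⟨a, b, h1, h2, h3, h4⟩ := hexact 0 0 l₂ (-l₁)
    (isHomogeneous_zero _ _ _) (isHomogeneous_zero _ _ _) hl₂ hl₁.neg
    (by linear_combination hdet) (by ring)
  have hc := Fintype.linearIndependent_iff.mp hind ![-a, 0, 1]
    (by
      simp only [Fin.sum_univ_three, Matrix.cons_val_zero, Matrix.cons_val_one,
        Matrix.head_cons, Matrix.cons_val_two, Matrix.tail_cons]
      rw [smul_eq_C_mul, smul_eq_C_mul, smul_eq_C_mul, h3]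
      simp only [map_neg, map_zero, map_one]
      ring) 2
  simp at hc
end
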